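/- There is no uniform window bound for the direct bounded window objective in Markov chains: in the chain of the previous context, sup over runs reaching t of the minimal λ for which the run satisfies DFW(λ) is infinite (for every λ there is a run of positive probability requiring window size larger than λ), even though almost every run satisfies DFW(λ) for some finite λ. -/

import Mathlib

open MeasureTheory

/-- Transition matrix of the two-state Markov chain: `s → s` w.p. 1/2,
`s → t` w.p. 1/2, `t` absorbing. -/
noncomputable def P2 : Fin 2 → Fin 2 → ENNReal := ![![1/2, 1/2], ![0, 1]]

lemma P2_00 : P2 0 0 = 1/2 := by simp [P2]
lemma P2_01 : P2 0 1 = 1/2 := by simp [P2]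

/-- No uniform window bound: for every `λ` there is a positive-probability set
of runs reaching `t` but not satisfying `DFW(λ)`, although almost every run
satisfies `DFW(λ)` for some finite `λ`. -/
theorem no_uniform_window_bound (μ : Measure (ℕ → Fin 2)) [IsProbabilityMeasure μ]
    (hμ : ∀ (n : ℕ) (f : ℕ → Fin 2), f 0 = 0 →
      μ {ρ | ∀ i ≤ n, ρ i = f i} = ∏ i ∈ Finset.range n, P2 (f i) (f (i + 1))) :
    (∀ lam : ℕ, 1 ≤ lam →
      0 < μ {ρ | (∃ n, ρ n = 1) ∧ ¬ ∃ l, l ≤ lam - 1 ∧ ρ l = 1}) ∧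
    μ {ρ : ℕ → Fin 2 | ∃ lam : ℕ, 1 ≤ lam ∧ ∃ l, l ≤ lam - 1 ∧ ρ l = 1} = 1 := by
  constructor
  · intro lam _
    set g : ℕ → Fin 2 := fun i => if i ≤ lam then 0 else 1 with hg
    have hC : μ {ρ | ∀ i ≤ lam + 1, ρ i = g i}
        = ∏ i ∈ Finset.range (lam + 1), P2 (g i) (g (i + 1)) :=
      hμ (lam + 1) g (by simp [hg])
    have hprod : ∏ i ∈ Finset.range (lam + 1), P2 (g i) (g (i + 1))
        = (1/2 : ENNReal) ^ (lam + 1) := by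
      rw [Finset.prod_congr rfl (fun i hi => ?_), Finset.prod_const,
        Finset.card_range]
      have hi' : i ≤ lam := Nat.lt_succ_iff.mp (Finset.mem_range.mp hi)
      have h1 : g i = 0 := by simp [hg, hi']
      by_cases h : i + 1 ≤ lam
      · have h2 : g (i + 1) = 0 := by simp [hg, h]
        rw [h1, h2, P2_00]
      · have h2 : g (i + 1) = 1 := by simp [hg, h]
        rw [h1, h2, P2_01]
    have hpos : (0 : ENNReal) < (1/2 : ENNReal) ^ (lam + 1) := by
      apply ENNReal.pow_pos; norm_num
    have hsub : {ρ : ℕ → Fin 2 | ∀ i ≤ lam + 1, ρ i = g i}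
        ⊆ {ρ | (∃ n, ρ n = 1) ∧ ¬ ∃ l, l ≤ lam - 1 ∧ ρ l = 1} := by
      intro ρ hρ
      refine ⟨⟨lam + 1, ?_⟩, ?_⟩
      · have := hρ (lam + 1) le_rfl
        simpa [hg] using this
      · rintro ⟨l, hl, hl1⟩
        have hll : l ≤ lam := le_trans hl (Nat.sub_le _ _)
        have := hρ l (le_trans hll (Nat.le_succ _))
        rw [this] at hl1
        simp [hg, hll] at hl1
    calc (0 : ENNReal) < (1/2 : ENNReal) ^ (lam + 1) := hpos
      _ = μ {ρ | ∀ i ≤ lam + 1, ρ i = g i} := by rw [hC, hprod]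
      _ ≤ _ := measure_mono hsub
  · set A : Set (ℕ → Fin 2) :=
      {ρ : ℕ → Fin 2 | ∃ lam : ℕ, 1 ≤ lam ∧ ∃ l, l ≤ lam - 1 ∧ ρ l = 1} with hA
    have hcompl : Aᶜ ⊆ {ρ : ℕ → Fin 2 | ∀ l, ρ l = 0} := by
      intro ρ hρ l
      have : ¬ ρ l = 1 := by
        intro h; exact hρ ⟨l + 1, by omega, l, by omega, h⟩
      omega
    have hzero : μ Aᶜ = 0 := by
      have key : ∀ n : ℕ, μ Aᶜ ≤ (1/2 : ENNReal) ^ n := by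
        intro n
        have h0 : μ {ρ : ℕ → Fin 2 | ∀ i ≤ n, ρ i = (fun _ => (0 : Fin 2)) i}
            = ∏ i ∈ Finset.range n, P2 0 0 := hμ n (fun _ => 0) rfl
        have hsub : Aᶜ ⊆ {ρ : ℕ → Fin 2 | ∀ i ≤ n, ρ i = (fun _ => (0 : Fin 2)) i} := by
          intro ρ hρ i _
          exact hcompl hρ i
        calc μ Aᶜ ≤ _ := measure_mono hsub
          _ = (1/2 : ENNReal) ^ n := by
            rw [h0]; simp [P2_00]
      have htend : Filter.Tendsto (fun n : ℕ => (1/2 : ENNReal) ^ n)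
          Filter.atTop (nhds 0) :=
        ENNReal.tendsto_pow_atTop_nhds_zero_of_lt_one (by norm_num)
      exact le_antisymm (ge_of_tendsto' htend key) (zero_le)
    have h1 : (1 : ENNReal) ≤ μ A := by
      have := measure_union_le (μ := μ) A Aᶜ
      rw [Set.union_compl_self, measure_univ, hzero, add_zero] at this
      exact this
    exact le_antisymm prob_le_one h1
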